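/- Let f: S → ℝ be the function f(X) = −log det X + tr(X Σ̂) on the open cone S of symmetric positive definite n×n matrices, with Σ̂ ≻ 0. Then f(X) → +∞ as ‖X‖ → ∞ within S; consequently f attains its infimum on S. -/

import Mathlib

open Matrix Filter

attribute [local instance] Matrix.normedAddCommGroup

attribute [local instance] Matrix.normedSpace


namespace Matrix.PosSemidef

open scoped MatrixOrder

noncomputable def sqrt {n : ℕ} {A : Matrix (Fin n) (Fin n) ℝ} (_hA : A.PosSemidef) :
    Matrix (Fin n) (Fin n) ℝ := CFC.sqrt A

lemma sqrt_mul_self {n : ℕ} {A : Matrix (Fin n) (Fin n) ℝ} (hA : A.PosSemidef) :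
    hA.sqrt * hA.sqrt = A :=
  CFC.sqrt_mul_sqrt_self A (Matrix.nonneg_iff_posSemidef.mpr hA)

lemma posSemidef_sqrt {n : ℕ} {A : Matrix (Fin n) (Fin n) ℝ} (hA : A.PosSemidef) :
    hA.sqrt.PosSemidef :=
  Matrix.nonneg_iff_posSemidef.mp (CFC.sqrt_nonneg A)

end Matrix.PosSemidef

namespace CoerciveAux

variable {n : ℕ}

lemma isHermitian_of_isSymm {A : Matrix (Fin n) (Fin n) ℝ} (h : A.IsSymm) : A.IsHermitian := by
  rw [Matrix.IsHermitian, Matrix.conjTranspose_eq_transpose_of_trivial]; exact h.eq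

/-- Frobenius-type bound. -/
lemma mulVec_sq_sum_le (A : Matrix (Fin n) (Fin n) ℝ) (v : Fin n → ℝ) :
    ∑ i, ((A *ᵥ v) i) ^ 2 ≤ (∑ i, ∑ j, (A i j) ^ 2) * ∑ j, (v j) ^ 2 := by
  rw [Finset.sum_mul]
  refine Finset.sum_le_sum fun i _ => ?_
  simpa [Matrix.mulVec, dotProduct] using
    Finset.sum_mul_sq_le_sq_mul_sq Finset.univ (fun j => A i j) v

/-- A positive-definite matrix has a positive quadratic-form lower bound. -/
lemma exists_quad_lb (S : Matrix (Fin n) (Fin n) ℝ) (hpd : S.PosDef) :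
    ∃ c : ℝ, 0 < c ∧ ∀ v : Fin n → ℝ, c * ∑ i, (v i) ^ 2 ≤ v ⬝ᵥ (S *ᵥ v) := by
  classical
  set T := hpd.posSemidef.sqrt with hT
  have hTT : T * T = S := hpd.posSemidef.sqrt_mul_self
  have hTsymm : ∀ i j, T i j = T j i := by
    intro i j
    have := hpd.posSemidef.posSemidef_sqrt.1
    rw [Matrix.IsHermitian, Matrix.conjTranspose_eq_transpose_of_trivial] at this
    exact (Matrix.IsSymm.apply this j i)
  have hdetT : IsUnit T.det := by
    have : T.det * T.det = S.det := by rw [← Matrix.det_mul, hTT]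
    have hS := hpd.det_pos
    have : T.det ≠ 0 := fun h => by simp [h] at this; exact hS.ne' this.symm
    exact this.isUnit
  have hinv : T⁻¹ * T = 1 := Matrix.nonsing_inv_mul T hdetT
  obtain ⟨M, hMdef⟩ : ∃ M : ℝ, M = (∑ i, ∑ j, ((T⁻¹) i j) ^ 2) + 1 := ⟨_, rfl⟩
  have hMpos : 0 < M := by
    have : (0:ℝ) ≤ ∑ i, ∑ j, ((T⁻¹) i j) ^ 2 :=
      Finset.sum_nonneg fun i _ => Finset.sum_nonneg fun j _ => sq_nonneg _
    rw [hMdef]; linarith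
  refine ⟨1 / M, by positivity, fun v => ?_⟩
  have hrec : T⁻¹ *ᵥ (T *ᵥ v) = v := by
    rw [Matrix.mulVec_mulVec, hinv, Matrix.one_mulVec]
  have key : ∑ i, (v i) ^ 2 ≤ M * ∑ i, ((T *ᵥ v) i) ^ 2 := by
    have h1 := mulVec_sq_sum_le (T⁻¹) (T *ᵥ v)
    rw [hrec] at h1
    have h2 : (∑ i, ∑ j, ((T⁻¹) i j) ^ 2) * ∑ j, ((T *ᵥ v) j) ^ 2 ≤
        M * ∑ j, ((T *ᵥ v) j) ^ 2 := by
      have h3 : (0:ℝ) ≤ ∑ j, ((T *ᵥ v) j) ^ 2 := Finset.sum_nonneg fun j _ => sq_nonneg _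
      rw [hMdef]; nlinarith
    exact h1.trans h2
  have hquad : v ⬝ᵥ (S *ᵥ v) = ∑ i, ((T *ᵥ v) i) ^ 2 := by
    rw [← hTT, ← Matrix.mulVec_mulVec, Matrix.dotProduct_mulVec]
    have : T.vecMul v = T *ᵥ v := by
      ext j
      simp only [Matrix.vecMul, Matrix.mulVec, dotProduct]
      exact Finset.sum_congr rfl fun i _ => by rw [hTsymm j i, mul_comm]
    rw [this]
    simp [dotProduct, sq]
  rw [hquad]
  calc 1 / M * ∑ i, (v i) ^ 2 ≤ 1 / M * (M * ∑ i, ((T *ᵥ v) i) ^ 2) :=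
        mul_le_mul_of_nonneg_left key (by positivity)
    _ = ∑ i, ((T *ᵥ v) i) ^ 2 := by field_simp

lemma diag_entries (X : Matrix (Fin n) (Fin n) ℝ) (hX : X.PosSemidef) (i : Fin n) :
    0 ≤ X i i := by
  simpa [dotProduct, Matrix.mulVec, Pi.single_apply] using hX.dotProduct_mulVec_nonneg (Pi.single i 1)

lemma diag_le_trace (X : Matrix (Fin n) (Fin n) ℝ) (hX : X.PosSemidef) (i : Fin n) :
    X i i ≤ X.trace := by
  have : X.trace = ∑ j, X j j := rfl
  rw [this]
  exact Finset.single_le_sum (fun j _ => diag_entries X hX j) (Finset.mem_univ i)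

lemma trace_nonneg (X : Matrix (Fin n) (Fin n) ℝ) (hX : X.PosSemidef) : 0 ≤ X.trace :=
  Finset.sum_nonneg fun i _ => diag_entries X hX i

/-- entrywise bound: |X i j| ≤ trace X for PSD X -/
lemma abs_entry_le_trace (X : Matrix (Fin n) (Fin n) ℝ) (hX : X.PosSemidef) (i j : Fin n) :
    |X i j| ≤ X.trace := by
  classical
  have hS : hX.sqrt * hX.sqrt = X := hX.sqrt_mul_self
  set S := hX.sqrt with hSdef
  have hSsymm : ∀ a b, S a b = S b a := by
    intro a b
    have := hX.posSemidef_sqrt.1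
    rw [Matrix.IsHermitian, Matrix.conjTranspose_eq_transpose_of_trivial] at this
    exact (Matrix.IsSymm.apply this b a)
  have hij : X i j = ∑ k, S i k * S j k := by
    rw [← hS, Matrix.mul_apply]
    exact Finset.sum_congr rfl fun k _ => by rw [hSsymm k j]
  have hii : X i i = ∑ k, S i k ^ 2 := by
    rw [← hS, Matrix.mul_apply]
    exact Finset.sum_congr rfl fun k _ => by rw [hSsymm k i, sq]
  have hjj : X j j = ∑ k, S j k ^ 2 := by
    rw [← hS, Matrix.mul_apply]
    exact Finset.sum_congr rfl fun k _ => by rw [hSsymm k j, sq]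
  have h1 : |X i j| ≤ (X i i + X j j) / 2 := by
    rw [hij, hii, hjj]
    calc |∑ k, S i k * S j k| ≤ ∑ k, |S i k * S j k| := Finset.abs_sum_le_sum_abs _ _
      _ ≤ ∑ k, (S i k ^ 2 + S j k ^ 2) / 2 := by
          refine Finset.sum_le_sum fun k _ => ?_
          rw [abs_mul]
          nlinarith [sq_abs (S i k), sq_abs (S j k), sq_nonneg (|S i k| - |S j k|)]
      _ = ((∑ k, S i k ^ 2) + ∑ k, S j k ^ 2) / 2 := by
          rw [← Finset.sum_add_distrib, Finset.sum_div]
  have h2 := diag_le_trace X hX i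
  have h3 := diag_le_trace X hX j
  linarith

lemma norm_le_trace (X : Matrix (Fin n) (Fin n) ℝ) (hX : X.PosSemidef) : ‖X‖ ≤ X.trace := by
  rw [Matrix.norm_le_iff (trace_nonneg X hX)]
  intro i j
  simpa [Real.norm_eq_abs] using abs_entry_le_trace X hX i j

lemma trace_eq_sum_eigenvalues (A : Matrix (Fin n) (Fin n) ℝ) (hA : A.IsHermitian) :
    A.trace = ∑ i, hA.eigenvalues i := by
  nth_rewrite 1 [hA.spectral_theorem]
  rw [Unitary.conjStarAlgAut_apply, Matrix.trace_mul_cycle]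
  rw [show (star hA.eigenvectorUnitary.1 : Matrix (Fin n) (Fin n) ℝ) * hA.eigenvectorUnitary.1 = 1
    from Matrix.mem_unitaryGroup_iff'.mp hA.eigenvectorUnitary.2]
  simp [Matrix.trace_diagonal]

lemma det_le_trace_pow (X : Matrix (Fin n) (Fin n) ℝ) (hX : X.PosSemidef) :
    X.det ≤ X.trace ^ n := by
  classical
  have hdet : X.det = ∏ i, hX.1.eigenvalues i := by simpa using hX.1.det_eq_prod_eigenvalues
  have htr : X.trace = ∑ i, hX.1.eigenvalues i := trace_eq_sum_eigenvalues X hX.1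
  rw [hdet]
  calc ∏ i, hX.1.eigenvalues i ≤ ∏ _i : Fin n, X.trace := by
        refine Finset.prod_le_prod (fun i _ => hX.eigenvalues_nonneg i) (fun i _ => ?_)
        rw [htr]
        exact Finset.single_le_sum (fun j _ => hX.eigenvalues_nonneg j) (Finset.mem_univ i)
    _ = X.trace ^ n := by rw [Finset.prod_const]; simp

lemma posDef_of_posSemidef_det_ne_zero (X : Matrix (Fin n) (Fin n) ℝ) (hX : X.PosSemidef)
    (hdet : X.det ≠ 0) : X.PosDef := by
  refine Matrix.posDef_iff_dotProduct_mulVec.mpr ⟨hX.1, fun x hx => ?_⟩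
  rcases lt_or_eq_of_le (hX.dotProduct_mulVec_nonneg x) with h | h
  · exact h
  · exfalso
    have h0 : X *ᵥ x = 0 := (hX.dotProduct_mulVec_zero_iff x).mp h.symm
    have hinj : Function.Injective (X.mulVec) :=
      Matrix.mulVec_injective_iff_isUnit.mpr ((Matrix.isUnit_iff_isUnit_det X).mpr hdet.isUnit)
    exact hx (hinj (by simp [h0]))

lemma tendsto_ct_sub_nlog (c : ℝ) (hc : 0 < c) (m : ℕ) :
    Tendsto (fun t : ℝ => c * t - m * Real.log t) atTop atTop := by
  have hlog : (fun t : ℝ => (m : ℝ) * Real.log t) =o[atTop] id :=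
    Real.isLittleO_log_id_atTop.const_mul_left _
  have hbound := hlog.bound (show (0:ℝ) < c / 2 by linarith)
  have hev : ∀ᶠ t : ℝ in atTop, c / 2 * t ≤ c * t - m * Real.log t := by
    filter_upwards [hbound, eventually_ge_atTop (0:ℝ)] with t ht ht0
    have : |(m : ℝ) * Real.log t| ≤ c / 2 * t := by
      rw [abs_mul, abs_of_nonneg (by positivity : (0:ℝ) ≤ (m:ℝ))]
      simpa [Real.norm_eq_abs, abs_of_nonneg ht0, abs_mul,
        abs_of_nonneg (by positivity : (0:ℝ) ≤ (m:ℝ))] using ht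
    have := abs_le.mp this
    linarith [this.1, this.2]
  exact tendsto_atTop_mono' _ hev (Tendsto.const_mul_atTop (by linarith) tendsto_id)

lemma trace_mul_ge (Sig : Matrix (Fin n) (Fin n) ℝ) (c : ℝ)
    (hquad : ∀ v : Fin n → ℝ, c * ∑ i, (v i) ^ 2 ≤ v ⬝ᵥ (Sig *ᵥ v))
    (X : Matrix (Fin n) (Fin n) ℝ) (hX : X.PosSemidef) :
    c * X.trace ≤ (X * Sig).trace := by
  classical
  have hS : hX.sqrt * hX.sqrt = X := hX.sqrt_mul_self
  set S := hX.sqrt with hSdef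
  have hSsymm : ∀ a b, S a b = S b a := by
    intro a b
    have := hX.posSemidef_sqrt.1
    rw [Matrix.IsHermitian, Matrix.conjTranspose_eq_transpose_of_trivial] at this
    exact (Matrix.IsSymm.apply this b a)
  have htr : (X * Sig).trace = (S * Sig * S).trace := by
    rw [← hS, mul_assoc, Matrix.trace_mul_comm]
  have hdiag : ∀ i, (fun j => S i j) ⬝ᵥ (Sig *ᵥ (fun j => S i j)) = (S * Sig * S) i i := by
    intro i
    simp only [Matrix.mul_apply, dotProduct, Matrix.mulVec, Finset.sum_mul,
      Finset.mul_sum]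
    rw [Finset.sum_comm]
    exact Finset.sum_congr rfl fun k _ => Finset.sum_congr rfl fun j _ => by
      rw [hSsymm k i]; ring
  have hXii : ∀ i, X i i = ∑ j, (S i j) ^ 2 := by
    intro i
    rw [← hS, Matrix.mul_apply]
    exact Finset.sum_congr rfl fun j _ => by rw [hSsymm j i, sq]
  have htrace_sum : X.trace = ∑ i, X i i := rfl
  have htrace_sum2 : (S * Sig * S).trace = ∑ i, (S * Sig * S) i i := rfl
  rw [htr, htrace_sum, htrace_sum2, Finset.mul_sum]
  refine Finset.sum_le_sum fun i _ => ?_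
  rw [hXii i, ← hdiag i]
  exact hquad (fun j => S i j)

end CoerciveAux


open CoerciveAux in
/-- On the open cone `S` of symmetric positive definite matrices, with
`Σ̂ ≻ 0`, the function `f(X) = -log det X + tr(X Σ̂)` tends to `+∞` as
`‖X‖ → ∞` within `S`; consequently `f` attains its infimum on `S`. -/
theorem neg_log_det_add_trace_coercive_and_attains_min
    (n : ℕ) (Sighat : Matrix (Fin n) (Fin n) ℝ)
    (hsymm : Sighat.IsSymm) (hpd : Sighat.PosDef) :
    Tendsto (fun X : Matrix (Fin n) (Fin n) ℝ =>
        -Real.log X.det + Matrix.trace (X * Sighat))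
      ((Filter.comap norm atTop) ⊓
        Filter.principal {X : Matrix (Fin n) (Fin n) ℝ | X.IsSymm ∧ X.PosDef})
      atTop ∧
    ∃ X₀ : Matrix (Fin n) (Fin n) ℝ, (X₀.IsSymm ∧ X₀.PosDef) ∧
      ∀ X : Matrix (Fin n) (Fin n) ℝ, X.IsSymm → X.PosDef →
        -Real.log X₀.det + Matrix.trace (X₀ * Sighat)
          ≤ -Real.log X.det + Matrix.trace (X * Sighat) := by
  classical
  obtain ⟨c, hc, hquad⟩ := exists_quad_lb Sighat hpd
  -- pointwise lower bound
  have hlb : ∀ X : Matrix (Fin n) (Fin n) ℝ, X.PosDef → 0 < X.trace →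
      c * X.trace - n * Real.log X.trace ≤ -Real.log X.det + Matrix.trace (X * Sighat) := by
    intro X hX htpos
    have h1 : c * X.trace ≤ (X * Sighat).trace := trace_mul_ge Sighat c hquad X hX.posSemidef
    have h2 : Real.log X.det ≤ n * Real.log X.trace := by
      have hd : X.det ≤ X.trace ^ n := det_le_trace_pow X hX.posSemidef
      calc Real.log X.det ≤ Real.log (X.trace ^ n) := Real.log_le_log hX.det_pos hd
        _ = n * Real.log X.trace := by rw [Real.log_pow]
    have : Matrix.trace (X * Sighat) = (X * Sighat).trace := rfl
    linarith
  have hcoer := tendsto_ct_sub_nlog c hc n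
  constructor
  · -- coercivity
    rw [tendsto_atTop]
    intro b
    obtain ⟨R, hR⟩ := eventually_atTop.mp (hcoer.eventually_ge_atTop b)
    rw [eventually_inf_principal, eventually_comap, eventually_atTop]
    refine ⟨max R 1, fun t ht X hXt hXS => ?_⟩
    obtain ⟨hXsymm, hXpd⟩ := hXS
    have hnt : max R 1 ≤ X.trace := by
      have h := norm_le_trace X hXpd.posSemidef
      rw [hXt] at h
      linarith
    have htpos : 0 < X.trace :=
      lt_of_lt_of_le (lt_of_lt_of_le one_pos (le_max_right R 1)) hnt
    have h1 := hlb X hXpd htpos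
    have h2 := hR X.trace (le_trans (le_max_left R 1) hnt)
    linarith
  · -- attainment of the minimum
    obtain ⟨F1, hF1def⟩ : ∃ F1 : ℝ, F1 = -Real.log (1 : Matrix (Fin n) (Fin n) ℝ).det +
        Matrix.trace ((1 : Matrix (Fin n) (Fin n) ℝ) * Sighat) := ⟨_, rfl⟩
    obtain ⟨R₀, hR₀⟩ := eventually_atTop.mp (hcoer.eventually_ge_atTop (F1 + 1))
    obtain ⟨R, hRdef⟩ : ∃ R : ℝ, R = max (max R₀ 1) ‖(1 : Matrix (Fin n) (Fin n) ℝ)‖ := ⟨_, rfl⟩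
    obtain ⟨δ, hδdef⟩ : ∃ δ : ℝ, δ = min 1 (Real.exp (-(F1 + 1))) := ⟨_, rfl⟩
    have hδpos : 0 < δ := hδdef ▸ lt_min one_pos (Real.exp_pos _)
    obtain ⟨K, hKdef⟩ : ∃ K : Set (Matrix (Fin n) (Fin n) ℝ),
        K = {X | X.IsSymm ∧ (∀ v : Fin n → ℝ, 0 ≤ star v ⬝ᵥ X *ᵥ v) ∧ ‖X‖ ≤ R ∧ δ ≤ X.det} :=
      ⟨_, rfl⟩
    have hKclosed : IsClosed K := by
      rw [hKdef]
      have c1 : IsClosed {X : Matrix (Fin n) (Fin n) ℝ | X.IsSymm} :=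
        isClosed_eq continuous_id.matrix_transpose continuous_id
      have c2 : IsClosed {X : Matrix (Fin n) (Fin n) ℝ | ∀ v : Fin n → ℝ,
          0 ≤ star v ⬝ᵥ X *ᵥ v} := by
        have heq : {X : Matrix (Fin n) (Fin n) ℝ | ∀ v : Fin n → ℝ, 0 ≤ star v ⬝ᵥ X *ᵥ v} =
            ⋂ v : Fin n → ℝ, {X | 0 ≤ star v ⬝ᵥ X *ᵥ v} := by
          ext X; simp
        rw [heq]
        refine isClosed_iInter fun v => isClosed_le continuous_const ?_
        simp only [dotProduct, Matrix.mulVec]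
        fun_prop
      have c3 : IsClosed {X : Matrix (Fin n) (Fin n) ℝ | ‖X‖ ≤ R} :=
        isClosed_le continuous_norm continuous_const
      have c4 : IsClosed {X : Matrix (Fin n) (Fin n) ℝ | δ ≤ X.det} :=
        isClosed_le continuous_const (continuous_id.matrix_det)
      have heq2 : {X : Matrix (Fin n) (Fin n) ℝ | X.IsSymm ∧
          (∀ v : Fin n → ℝ, 0 ≤ star v ⬝ᵥ X *ᵥ v) ∧ ‖X‖ ≤ R ∧ δ ≤ X.det} =
          {X : Matrix (Fin n) (Fin n) ℝ | X.IsSymm} ∩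
          ({X | ∀ v : Fin n → ℝ, 0 ≤ star v ⬝ᵥ X *ᵥ v} ∩
            ({X | ‖X‖ ≤ R} ∩ {X | δ ≤ X.det})) := by
        ext X; simp [Set.mem_inter_iff, and_assoc]
      rw [heq2]
      exact c1.inter (c2.inter (c3.inter c4))
    have hKcompact : IsCompact K := by
      refine (isCompact_closedBall (0 : Matrix (Fin n) (Fin n) ℝ) R).of_isClosed_subset
        hKclosed ?_
      intro X hX
      rw [hKdef] at hX
      exact mem_closedBall_zero_iff.mpr hX.2.2.1
    have hcont : ContinuousOn (fun X : Matrix (Fin n) (Fin n) ℝ =>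
        -Real.log X.det + Matrix.trace (X * Sighat)) K := by
      refine ContinuousOn.add ?_ ?_
      · refine ContinuousOn.neg ?_
        intro X hX
        rw [hKdef] at hX
        have hdet : X.det ≠ 0 := (lt_of_lt_of_le hδpos hX.2.2.2).ne'
        exact ((Real.continuousAt_log hdet).comp
          (continuous_id.matrix_det.continuousAt)).continuousWithinAt
      · exact (Continuous.matrix_trace (continuous_id.matrix_mul continuous_const)).continuousOn
    have h1K : (1 : Matrix (Fin n) (Fin n) ℝ) ∈ K := by
      rw [hKdef]
      refine ⟨Matrix.isSymm_one, fun v => Matrix.PosDef.one.posSemidef.dotProduct_mulVec_nonneg v, ?_, ?_⟩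
      · rw [hRdef]; exact le_max_right _ _
      · rw [Matrix.det_one, hδdef]; exact min_le_left _ _
    obtain ⟨X₀, hX₀K, hminOn⟩ := hKcompact.exists_isMinOn ⟨1, h1K⟩ hcont
    have hX₀K' := hKdef ▸ hX₀K
    have hX₀psd : X₀.PosSemidef := Matrix.PosSemidef.of_dotProduct_mulVec_nonneg (isHermitian_of_isSymm hX₀K'.1) hX₀K'.2.1
    have hX₀pd : X₀.PosDef := posDef_of_posSemidef_det_ne_zero X₀ hX₀psd
      (lt_of_lt_of_le hδpos hX₀K'.2.2.2).ne'
    refine ⟨X₀, ⟨hX₀K'.1, hX₀pd⟩, fun X hXs hXpd => ?_⟩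
    by_cases hXK : X ∈ K
    · exact isMinOn_iff.mp hminOn X hXK
    · have hF1 : -Real.log X₀.det + Matrix.trace (X₀ * Sighat) ≤ F1 := by
        rw [hF1def]; exact isMinOn_iff.mp hminOn 1 h1K
      have htr0 : ‖X‖ ≤ X.trace := norm_le_trace X hXpd.posSemidef
      have htrn : 0 ≤ X.trace := le_trans (norm_nonneg X) htr0
      have hXS0 : 0 ≤ Matrix.trace (X * Sighat) := by
        have := trace_mul_ge Sighat c hquad X hXpd.posSemidef
        nlinarith
      have hnot : ¬(‖X‖ ≤ R ∧ δ ≤ X.det) := by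
        intro h
        exact hXK (hKdef ▸ ⟨hXs, fun v => hXpd.posSemidef.dotProduct_mulVec_nonneg v, h.1, h.2⟩)
      rw [not_and_or, not_le, not_le] at hnot
      have hgoal : F1 ≤ -Real.log X.det + Matrix.trace (X * Sighat) := by
        rcases hnot with hnorm | hdet
        · have hRge : max R₀ 1 ≤ R := hRdef ▸ le_max_left _ _
          have htrR : max R₀ 1 < X.trace := lt_of_le_of_lt hRge (lt_of_lt_of_le hnorm htr0)
          have htpos : 0 < X.trace :=
            lt_of_lt_of_le one_pos (le_trans (le_max_right R₀ 1) htrR.le)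
          have h1 := hlb X hXpd htpos
          have h2 := hR₀ X.trace (le_trans (le_max_left R₀ 1) htrR.le)
          linarith
        · have hdet2 : X.det < Real.exp (-(F1 + 1)) :=
            lt_of_lt_of_le hdet (hδdef ▸ min_le_right _ _)
          have hlog : Real.log X.det < -(F1 + 1) := by
            have := Real.log_lt_log hXpd.det_pos hdet2
            rwa [Real.log_exp] at this
          linarith
      linarith
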